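/- arXiv:2103.12301 — 3 statements merged into one kernel-verified Lean document; each statement's English description precedes it below -/
import Mathlib

section
/- Let (F(A))_{A ⊆ V, A ≠ ∅} be a family of real numbers indexed by nonempty subsets of a finite set V, such that for every nonempty B ⊆ V, the sum ∑_{∅ ≠ A ⊆ B} F(A) lies in [0,1]. Then for every nonempty B ⊆ V, |F(B)| ≤ |B|^{|B|}. -/
open Finset

lemma pow_sum_powerset {α : Type*} [DecidableEq α] (x : ℝ) (s : Finset α) :
    ∑ A ∈ s.powerset, x ^ A.card = (x + 1) ^ s.card := by
  induction s using Finset.induction_on with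
  | empty => simp
  | insert _ _ ha ih =>
    rename_i a s
    rw [Finset.sum_powerset_insert ha]
    have : ∀ t ∈ s.powerset, x ^ (insert a t).card = x * x ^ t.card := by
      intro t ht
      rw [Finset.card_insert_of_notMem (fun hc => ha (Finset.mem_powerset.mp ht hc)),
        pow_succ, mul_comm]
    rw [Finset.sum_congr rfl this, ← Finset.mul_sum, ih,
      Finset.card_insert_of_notMem ha, pow_succ]
    ring

theorem stmt_4 {α : Type*} [DecidableEq α] (V : Finset α) (F : Finset α → ℝ)
    (h : ∀ B ⊆ V, B.Nonempty →
      (∑ A ∈ B.powerset.filter (fun A => A ≠ ∅), F A) ∈ Set.Icc (0 : ℝ) 1) :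
    ∀ B ⊆ V, B.Nonempty → |F B| ≤ (B.card : ℝ) ^ B.card := by
  intro B
  induction B using Finset.strongInduction with
  | _ B ih =>
  intro hBV hBne
  set n := B.card with hn
  have hn1 : 1 ≤ n := Finset.card_pos.mpr hBne
  set P := B.powerset.filter (fun A => A ≠ ∅) with hP
  have hBP : B ∈ P := by
    simp [hP, Finset.mem_filter, hBne.ne_empty]
  have hS := h B hBV hBne
  -- F B = S - T
  have hsplit : F B + ∑ A ∈ P.erase B, F A = ∑ A ∈ P, F A :=
    Finset.add_sum_erase P F hBP
  have hFB : F B = (∑ A ∈ P, F A) - ∑ A ∈ P.erase B, F A := by linarith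
  -- bound terms
  have hterm : ∀ A ∈ P.erase B, |F A| ≤ ((n : ℝ) - 1) ^ A.card := by
    intro A hA
    obtain ⟨hAB, hAsub, hAne⟩ : A ≠ B ∧ A ⊆ B ∧ A ≠ ∅ := by
      simp only [Finset.mem_erase, hP, Finset.mem_filter, Finset.mem_powerset] at hA
      tauto
    have hss : A ⊂ B := lt_of_le_of_ne hAsub hAB
    have hAcard : A.card ≤ n - 1 := Nat.le_sub_one_of_lt (Finset.card_lt_card hss)
    have h1 := ih A hss (hAsub.trans hBV) (Finset.nonempty_iff_ne_empty.mpr hAne)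
    refine h1.trans ?_
    have : ((n : ℝ) - 1) = ((n - 1 : ℕ) : ℝ) := by
      push_cast [Nat.cast_sub hn1]; ring
    rw [this]
    exact pow_le_pow_left₀ (Nat.cast_nonneg _) (Nat.cast_le.mpr hAcard) _
  have hT : |∑ A ∈ P.erase B, F A| ≤ ∑ A ∈ P.erase B, ((n : ℝ) - 1) ^ A.card :=
    (Finset.abs_sum_le_sum_abs _ _).trans (Finset.sum_le_sum hterm)
  -- sum over P.erase B of (n-1)^card ≤ n^n - 1 - (n-1)^n
  have hpow : ∑ A ∈ B.powerset, ((n : ℝ) - 1) ^ A.card = (n : ℝ) ^ n := by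
    have := pow_sum_powerset ((n : ℝ) - 1) B
    rw [← hn] at this
    simpa using this
  have hmem1 : (∅ : Finset α) ∈ B.powerset := Finset.empty_mem_powerset B
  have hsub : P.erase B ⊆ (B.powerset.erase ∅).erase B := by
    intro A hA
    simp only [Finset.mem_erase, hP, Finset.mem_filter] at hA ⊢
    tauto
  have hnn : ∀ A ∈ (B.powerset.erase ∅).erase B, (0:ℝ) ≤ ((n : ℝ) - 1) ^ A.card := by
    intro A _
    have h1 : (1:ℝ) ≤ n := by exact_mod_cast hn1
    exact pow_nonneg (by linarith) _
  have hsum1 : ∑ A ∈ P.erase B, ((n : ℝ) - 1) ^ A.card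
      ≤ ∑ A ∈ (B.powerset.erase ∅).erase B, ((n : ℝ) - 1) ^ A.card :=
    Finset.sum_le_sum_of_subset_of_nonneg hsub (fun A hA _ => hnn A hA)
  have hBmem : B ∈ B.powerset.erase ∅ := by
    simp [Finset.mem_erase, hBne.ne_empty]
  have e1 : ((n : ℝ) - 1) ^ B.card + ∑ A ∈ (B.powerset.erase ∅).erase B, ((n : ℝ) - 1) ^ A.card
      = ∑ A ∈ B.powerset.erase ∅, ((n : ℝ) - 1) ^ A.card :=
    Finset.add_sum_erase _ (fun A => ((n:ℝ)-1) ^ A.card) hBmem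
  have e2 : ((n : ℝ) - 1) ^ (∅ : Finset α).card + ∑ A ∈ B.powerset.erase ∅, ((n : ℝ) - 1) ^ A.card
      = ∑ A ∈ B.powerset, ((n : ℝ) - 1) ^ A.card :=
    Finset.add_sum_erase _ (fun A => ((n:ℝ)-1) ^ A.card) hmem1
  have hpos : (0:ℝ) ≤ ((n : ℝ) - 1) ^ B.card := by
    have h1 : (1:ℝ) ≤ n := by exact_mod_cast hn1
    exact pow_nonneg (by linarith) _
  simp only [Finset.card_empty, pow_zero] at e2
  obtain ⟨hS0, hS1⟩ := hS
  have : |F B| ≤ |∑ A ∈ P, F A| + |∑ A ∈ P.erase B, F A| := by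
    rw [hFB]; exact abs_sub _ _
  have habsS : |∑ A ∈ P, F A| ≤ 1 := abs_le.mpr ⟨by linarith, hS1⟩
  calc |F B| ≤ 1 + ∑ A ∈ P.erase B, ((n : ℝ) - 1) ^ A.card := by linarith
    _ ≤ (n : ℝ) ^ n := by linarith [hsum1, e1, e2, hpow, hpos]
end

section
/- Let (b_j)_{j≥1} be a real sequence satisfying, for all j ≥ 1, the relation −d_j·b_j + f_j·b_{j−1} + ∑_{l=1}^{j+1} τ(l,j)·b_l = 0, where d_j = λ + j(j−1) + jσ, f_j = (j−1)σ (with b_0 := 0), τ(j+1,j) = (j+1)j, and for i ≤ j ≤ 2i, τ(i,j) = C(i, j−i)∫_{(−1,1)}(1+z)^{2i−j}(−z)^{j−i} ν(dz), τ(i,j) = 0 otherwise. If ∫_{(−1,1)} z ν(dz) = σ, then b_j = 0 for all j ≥ 2. -/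
open MeasureTheory in
theorem stmt_11 (σ : ℝ) (hσ : 0 ≤ σ) (ν : Measure ℝ) [IsFiniteMeasure ν]
    (lam : ℝ) (hlam : lam = (ν (Set.Ioo (-1 : ℝ) 1)).toReal)
    (τ : ℕ → ℕ → ℝ)
    (hτlow : ∀ i j : ℕ, 1 ≤ i → j + 1 < i → τ i j = 0)
    (hτdiag : ∀ j : ℕ, 1 ≤ j → τ (j + 1) j = ((j : ℝ) + 1) * j)
    (hτmid : ∀ i j : ℕ, 1 ≤ i → i ≤ j → j ≤ 2 * i →
      τ i j = (Nat.choose i (j - i) : ℝ) *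
        ∫ z in Set.Ioo (-1 : ℝ) 1, (1 + z) ^ (2 * i - j) * (-z) ^ (j - i) ∂ν)
    (hτhigh : ∀ i j : ℕ, 1 ≤ i → 2 * i < j → τ i j = 0)
    (b : ℕ → ℝ) (hb0 : b 0 = 0)
    (hrel : ∀ j : ℕ, 1 ≤ j →
      -(lam + (j : ℝ) * ((j : ℝ) - 1) + (j : ℝ) * σ) * b j
        + ((j : ℝ) - 1) * σ * b (j - 1)
        + ∑ l ∈ Finset.Icc 1 (j + 1), τ l j * b l = 0)
    (hmart : ∫ z in Set.Ioo (-1 : ℝ) 1, z ∂ν = σ) :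
    ∀ j : ℕ, 2 ≤ j → b j = 0 := by
  have hmeas : MeasurableSet (Set.Ioo (-1:ℝ) 1) := measurableSet_Ioo
  have hz_int : Integrable (fun z : ℝ => z) (ν.restrict (Set.Ioo (-1) 1)) := by
    apply Integrable.mono' (integrable_const (1:ℝ))
    · exact aestronglyMeasurable_id
    · filter_upwards [ae_restrict_mem hmeas] with z hz
      rw [Real.norm_eq_abs, abs_le]
      exact ⟨hz.1.le, hz.2.le⟩
  have hone : ∫ _ in Set.Ioo (-1:ℝ) 1, (1:ℝ) ∂ν = lam := by
    rw [integral_const, smul_eq_mul, mul_one, measureReal_restrict_apply_univ, measureReal_def, hlam]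
  have hτ11 : τ 1 1 = lam + σ := by
    rw [hτmid 1 1 le_rfl le_rfl (by norm_num)]
    have : ∀ z : ℝ, (1 + z) ^ (2 * 1 - 1) * (-z) ^ (1 - 1) = 1 + z := by
      intro z; norm_num
    rw [show (2*1-1 : ℕ) = 1 from rfl, show (1-1 : ℕ) = 0 from rfl]
    simp only [pow_one, pow_zero, mul_one, Nat.choose_zero_right, Nat.cast_one, one_mul]
    rw [integral_add (integrable_const (1:ℝ)) hz_int, hone, hmart]
  have hτ12 : τ 1 2 = -σ := by
    rw [hτmid 1 2 le_rfl (by norm_num) (by norm_num)]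
    rw [show (2*1-2 : ℕ) = 0 from rfl, show (2-1 : ℕ) = 1 from rfl]
    simp only [pow_zero, pow_one, one_mul, Nat.choose_self, Nat.cast_one]
    rw [integral_neg, hmart]
  have hr1 := hrel 1 le_rfl
  have hr2 := hrel 2 (by norm_num)
  rw [Finset.sum_Icc_succ_top (by norm_num),
    Finset.Icc_self, Finset.sum_singleton] at hr1
  rw [Finset.sum_Icc_succ_top (by norm_num),
    show (2:ℕ) = 1 + 1 from rfl, Finset.sum_Icc_succ_top (by norm_num),
    Finset.Icc_self, Finset.sum_singleton] at hr2
  have hτ21 : τ 2 1 = 2 := by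
    have := hτdiag 1 le_rfl; norm_num at this; linarith
  have hτ32 : τ 3 2 = 6 := by
    have := hτdiag 2 (by norm_num); norm_num at this; linarith
  have hb2 : b 2 = 0 := by
    rw [hτ11, hτ21] at hr1
    norm_num at hr1
    linarith
  have hb3 : b 3 = 0 := by
    rw [hτ12, hτ32, hb2] at hr2
    norm_num at hr2
    linarith
  have key : ∀ n : ℕ, b (n + 2) = 0 := by
    intro n
    induction n using Nat.strong_induction_on with
    | _ n ih =>
      match n with
      | 0 => exact hb2
      | 1 => exact hb3
      | (m+2) =>
        have hIH : ∀ l, 2 ≤ l → l ≤ m + 3 → b l = 0 := by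
          intro l hl2 hl
          obtain ⟨k, rfl⟩ : ∃ k, l = k + 2 := ⟨l - 2, by omega⟩
          exact ih k (by omega)
        have hr := hrel (m+3) (by omega)
        have hsum : ∑ l ∈ Finset.Icc 1 (m+3+1), τ l (m+3) * b l
            = τ (m+4) (m+3) * b (m+4) := by
          apply Finset.sum_eq_single_of_mem
          · rw [Finset.mem_Icc]; omega
          · intro l hl hne
            rw [Finset.mem_Icc] at hl
            rcases eq_or_lt_of_le hl.1 with h1 | h1
            · rw [← h1, hτhigh 1 (m+3) le_rfl (by omega), zero_mul]
            · rw [hIH l (by omega) (by omega), mul_zero]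
        rw [show m+3+1 = m+4 from rfl] at hsum
        rw [hsum] at hr
        rw [show (m+4 : ℕ) = (m+3)+1 from rfl, hτdiag (m+3) (by omega)] at hr
        rw [show (m+3-1 : ℕ) = m+2 from rfl, hIH (m+3) (by omega) le_rfl,
          hIH (m+2) (by omega) (by omega)] at hr
        have hcoef : ((((m+3 : ℕ) : ℝ)) + 1) * ((m+3 : ℕ) : ℝ) * b ((m+3)+1) = 0 := by
          linarith
        have hne : ((((m+3 : ℕ) : ℝ)) + 1) * ((m+3 : ℕ) : ℝ) ≠ 0 := by
          positivity
        have := mul_eq_zero.mp hcoef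
        rcases this with h | h
        · exact absurd h hne
        · exact h
  intro j hj
  obtain ⟨k, rfl⟩ : ∃ k, j = k + 2 := ⟨j - 2, by omega⟩
  exact key k
end

section
/- Let σ ≥ 0, λ ≥ 0, and let π : ℕ → [0,∞) be a probability distribution satisfying the recursion π(k) = (σ/k)π(k−1) + (λ/(k(k−1)))∑_{j=⌊(k+1)/2⌋}^{k−1} π(j) for k ≥ 2. Then for every n ≥ 0 and every k ≥ 3·2^n, π(k) ≤ (σ(σ+λ)+λ)·(σ+λ)^n / (k(k−1)·∏_{i=1}^n (2^{−i}k − 1)). -/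
private lemma tele_sum' (m : ℕ) (hm : 2 ≤ m) : ∀ K : ℕ, m - 1 ≤ K →
    ∑ j ∈ Finset.Icc m K, (1:ℝ)/((j:ℝ)*((j:ℝ)-1)) = 1/((m:ℝ)-1) - 1/(K:ℝ) := by
  intro K hK
  induction K, hK using Nat.le_induction with
  | base =>
    rw [Finset.Icc_eq_empty (by omega), Nat.cast_sub (by omega), Nat.cast_one]
    simp
  | succ K hK ih =>
    rw [Finset.sum_Icc_succ_top (by omega : m ≤ K + 1), ih]
    have hm1 : (2:ℝ) ≤ (m:ℝ) := by exact_mod_cast hm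
    have hK1 : (1:ℝ) ≤ (K:ℝ) := by exact_mod_cast (by omega : 1 ≤ K)
    push_cast
    have h4 : (K:ℝ) + 1 - 1 = (K:ℝ) := by ring
    rw [h4]
    have h1 : (m:ℝ) - 1 ≠ 0 := by linarith
    have h2 : (K:ℝ) ≠ 0 := by linarith
    have h3 : (K:ℝ) + 1 ≠ 0 := by linarith
    field_simp
    ring

private lemma div_split (a x q : ℝ) (hx : x ≠ 0) (hq : q ≠ 0) : a/(x*q) = a/q*(1/x) := by
  rw [div_mul_div_comm, mul_one, mul_comm x q]

private lemma prod_Icc_peel (f : ℕ → ℝ) : ∀ n : ℕ,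
    ∏ i ∈ Finset.Icc 1 (n+1), f i = f 1 * ∏ i ∈ Finset.Icc 1 n, f (i+1) := by
  intro n
  induction n with
  | zero => simp
  | succ n ih =>
    rw [Finset.prod_Icc_succ_top (by omega : 1 ≤ n+1+1), ih,
        Finset.prod_Icc_succ_top (by omega : 1 ≤ n+1)]
    ring

set_option maxHeartbeats 1600000 in
theorem stmt_17 (σ lam : ℝ) (hσ : 0 ≤ σ) (hlam : 0 ≤ lam)
    (π : ℕ → ℝ) (hpos : ∀ k, 0 ≤ π k) (hπ0 : π 0 = 0)
    (hsummable : Summable π) (hsum : ∑' k : ℕ, π k = 1)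
    (hrec : ∀ k : ℕ, 2 ≤ k → π k = (σ / k) * π (k - 1)
      + (lam / ((k : ℝ) * ((k : ℝ) - 1))) *
          ∑ j ∈ Finset.Icc ((k + 1) / 2) (k - 1), π j) :
    ∀ n k : ℕ, 3 * 2 ^ n ≤ k →
      π k ≤ (σ * (σ + lam) + lam) * (σ + lam) ^ n /
        ((k : ℝ) * ((k : ℝ) - 1) * ∏ i ∈ Finset.Icc 1 n, ((k : ℝ) / 2 ^ i - 1)) := by
  have hsl : 0 ≤ σ + lam := by linarith
  have hC0 : 0 ≤ σ * (σ + lam) + lam := add_nonneg (mul_nonneg hσ hsl) hlam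
  have hle1 : ∀ j, π j ≤ 1 := fun j => hsum ▸ Summable.le_tsum hsummable j (fun i _ => hpos i)
  have hsle1 : ∀ s : Finset ℕ, ∑ j ∈ s, π j ≤ 1 :=
    fun s => hsum ▸ Summable.sum_le_tsum s (fun i _ => hpos i) hsummable
  have hbase : ∀ k : ℕ, 2 ≤ k → π k ≤ (σ + lam) / k := by
    intro k hk
    have hK2 : (2:ℝ) ≤ (k:ℝ) := by exact_mod_cast hk
    have hKpos : (0:ℝ) < k := by linarith
    have hK1 : (0:ℝ) < (k:ℝ) - 1 := by linarith
    rw [hrec k hk]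
    calc σ / k * π (k-1) + lam / ((k:ℝ)*((k:ℝ)-1)) * ∑ j ∈ Finset.Icc ((k+1)/2) (k-1), π j
        ≤ σ / k * 1 + lam / ((k:ℝ)*((k:ℝ)-1)) * 1 :=
          add_le_add (mul_le_mul_of_nonneg_left (hle1 _) (div_nonneg hσ hKpos.le))
            (mul_le_mul_of_nonneg_left (hsle1 _) (div_nonneg hlam (mul_pos hKpos hK1).le))
      _ = σ / k + lam / ((k:ℝ)*((k:ℝ)-1)) := by ring
      _ ≤ σ / k + lam / (k:ℝ) := by
          have : lam / ((k:ℝ)*((k:ℝ)-1)) ≤ lam / (k:ℝ) :=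
            div_le_div_of_nonneg_left hlam hKpos (by nlinarith)
          linarith
      _ = (σ + lam) / k := by rw [add_div]
  intro n
  induction n with
  | zero =>
    intro k hk
    have hk3 : 3 ≤ k := by simpa using hk
    have hK3 : (3:ℝ) ≤ (k:ℝ) := by exact_mod_cast hk3
    have hKpos : (0:ℝ) < k := by linarith
    have hK1 : (0:ℝ) < (k:ℝ) - 1 := by linarith
    rw [Finset.Icc_eq_empty (by norm_num : ¬ (1:ℕ) ≤ 0), Finset.prod_empty, pow_zero,
      mul_one, mul_one]
    rw [hrec k (by omega)]
    have hkm1 : π (k-1) ≤ (σ + lam) / ((k:ℝ) - 1) := by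
      have h := hbase (k-1) (by omega)
      rwa [Nat.cast_sub (by omega), Nat.cast_one] at h
    calc σ / k * π (k-1) + lam / ((k:ℝ)*((k:ℝ)-1)) * ∑ j ∈ Finset.Icc ((k+1)/2) (k-1), π j
        ≤ σ / k * ((σ + lam) / ((k:ℝ) - 1)) + lam / ((k:ℝ)*((k:ℝ)-1)) * 1 :=
          add_le_add (mul_le_mul_of_nonneg_left hkm1 (div_nonneg hσ hKpos.le))
            (mul_le_mul_of_nonneg_left (hsle1 _) (div_nonneg hlam (mul_pos hKpos hK1).le))
      _ = (σ * (σ + lam) + lam) / ((k:ℝ) * ((k:ℝ) - 1)) := by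
          field_simp
  | succ n ih =>
    intro k hk
    have hp : 0 < 2^n := Nat.pow_pos (by norm_num)
    have hk6 : 6 * 2^n ≤ k := by
      have : 3 * 2^(n+1) = 6 * 2^n := by ring
      omega
    set K : ℝ := (k:ℝ) with hKdef
    have hK6 : 6 * 2^n ≤ K := by rw [hKdef]; exact_mod_cast hk6
    have h2n1 : (1:ℝ) ≤ 2^n := by exact_mod_cast (Nat.one_le_two_pow : 1 ≤ 2^n)
    have hK6' : (6:ℝ) ≤ K := by nlinarith
    have hKpos : (0:ℝ) < K := by linarith
    have hK1 : (0:ℝ) < K - 1 := by linarith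
    have hK2 : (0:ℝ) < K/2 - 1 := by linarith
    set m : ℕ := (k+1)/2 with hmdef
    have hm1 : 3 * 2^n ≤ m := by omega
    have hm2 : m ≤ k - 1 := by omega
    have h2m : k ≤ 2 * m := by omega
    have hKm : K/2 ≤ (m:ℝ) := by
      have : (k:ℝ) ≤ 2 * (m:ℝ) := by exact_mod_cast h2m
      linarith
    have hm3 : (3:ℝ) ≤ (m:ℝ) := by
      have : 3 ≤ m := by omega
      exact_mod_cast this
    -- positivity of the factors
    have hfac : ∀ i ∈ Finset.Icc 1 n, (0:ℝ) < (K/2)/2^i - 1 := by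
      intro i hi
      have hin : i ≤ n := (Finset.mem_Icc.mp hi).2
      have h2i : (0:ℝ) < 2^i := by positivity
      have h2in : (2:ℝ)^i ≤ 2^n := pow_le_pow_right₀ (by norm_num) hin
      rw [sub_pos, lt_div_iff₀ h2i, one_mul]
      nlinarith
    set Q : ℝ := ∏ i ∈ Finset.Icc 1 n, ((K/2)/2^i - 1) with hQdef
    have hQpos : 0 < Q := Finset.prod_pos hfac
    have hQle : ∀ x : ℝ, K/2 ≤ x → Q ≤ ∏ i ∈ Finset.Icc 1 n, (x/2^i - 1) := by
      intro x hx
      apply Finset.prod_le_prod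
      · intro i hi; exact (hfac i hi).le
      · intro i hi
        have h2i : (0:ℝ) < 2^i := by positivity
        gcongr
    -- bound on π (k-1)
    have hA : π (k-1) ≤ (σ*(σ+lam)+lam) * (σ+lam)^n / ((K-1) * (K/2-1) * Q) := by
      have h := ih (k-1) (by omega)
      rw [Nat.cast_sub (by omega), Nat.cast_one] at h
      refine h.trans ?_
      have hnum : 0 ≤ (σ*(σ+lam)+lam) * (σ+lam)^n := by positivity
      apply div_le_div_of_nonneg_left hnum
      · exact mul_pos (mul_pos hK1 hK2) hQpos
      · have h1 : Q ≤ ∏ i ∈ Finset.Icc 1 n, ((K-1)/2^i - 1) := hQle (K-1) (by linarith)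
        have h2 : K/2 - 1 ≤ K - 1 - 1 := by linarith
        have h3 : 0 ≤ K - 1 := hK1.le
        nlinarith [mul_nonneg (mul_nonneg h3 hK2.le) hQpos.le, mul_pos hK1 hK2]
    -- bound on the sum
    have hS : ∑ j ∈ Finset.Icc m (k-1), π j ≤
        ((σ*(σ+lam)+lam) * (σ+lam)^n / Q) * (1/(K/2-1)) := by
      have hstep : ∀ j ∈ Finset.Icc m (k-1),
          π j ≤ ((σ*(σ+lam)+lam) * (σ+lam)^n / Q) * (1/((j:ℝ)*((j:ℝ)-1))) := by
        intro j hj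
        obtain ⟨hj1, hj2⟩ := Finset.mem_Icc.mp hj
        have hj3 : (3:ℝ) ≤ (j:ℝ) := by
          have : 3 ≤ j := by omega
          exact_mod_cast this
        have hjK : K/2 ≤ (j:ℝ) := by
          have : k ≤ 2 * j := by omega
          have h' : (k:ℝ) ≤ 2 * (j:ℝ) := by exact_mod_cast this
          linarith
        have h := ih j (by omega)
        refine h.trans ?_
        have hnum : 0 ≤ (σ*(σ+lam)+lam) * (σ+lam)^n := by positivity
        have hjpos : (0:ℝ) < (j:ℝ) := by linarith
        have hj1' : (0:ℝ) < (j:ℝ) - 1 := by linarith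
        have hd : (σ*(σ+lam)+lam) * (σ+lam)^n / ((j:ℝ)*((j:ℝ)-1) * ∏ i ∈ Finset.Icc 1 n, ((j:ℝ)/2^i - 1))
            ≤ (σ*(σ+lam)+lam) * (σ+lam)^n / ((j:ℝ)*((j:ℝ)-1) * Q) := by
          apply div_le_div_of_nonneg_left hnum
          · exact mul_pos (mul_pos hjpos hj1') hQpos
          · have := hQle (j:ℝ) hjK
            nlinarith [mul_pos hjpos hj1']
        refine hd.trans (le_of_eq ?_)
        have hx : (j:ℝ)*((j:ℝ)-1) ≠ 0 := by positivity
        exact div_split _ _ _ hx hQpos.ne'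
      have h2 : ∑ j ∈ Finset.Icc m (k-1), π j ≤
          ∑ j ∈ Finset.Icc m (k-1), ((σ*(σ+lam)+lam) * (σ+lam)^n / Q) * (1/((j:ℝ)*((j:ℝ)-1))) :=
        Finset.sum_le_sum hstep
      rw [← Finset.mul_sum] at h2
      refine h2.trans ?_
      have hnum : 0 ≤ (σ*(σ+lam)+lam) * (σ+lam)^n / Q := by positivity
      apply mul_le_mul_of_nonneg_left _ hnum
      rw [tele_sum' m (by omega) (k-1) (by omega)]
      have hkm1 : (0:ℝ) < ((k-1:ℕ):ℝ) := by
        have : 0 < k - 1 := by omega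
        exact_mod_cast this
      have : 0 ≤ 1/((k-1:ℕ):ℝ) := by positivity
      have hm1' : K/2 - 1 ≤ (m:ℝ) - 1 := by linarith
      have h1 : 1/((m:ℝ)-1) ≤ 1/(K/2-1) := by
        apply div_le_div_of_nonneg_left (by norm_num) hK2 hm1'
      linarith
    -- assemble
    rw [hrec k (by omega)]
    have hprod : ∏ i ∈ Finset.Icc 1 (n+1), (K/2^i - 1) = (K/2 - 1) * Q := by
      rw [prod_Icc_peel (fun i => K/2^i - 1) n]
      simp only [pow_one]
      congr 1
      apply Finset.prod_congr rfl
      intro i _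
      rw [pow_succ]
      ring
    rw [hprod]
    have hσK : 0 ≤ σ / K := div_nonneg hσ hKpos.le
    have hlamK : 0 ≤ lam / (K * (K-1)) := div_nonneg hlam (mul_pos hKpos hK1).le
    calc σ / K * π (k-1) + lam / (K*(K-1)) * ∑ j ∈ Finset.Icc ((k+1)/2) (k-1), π j
        ≤ σ / K * ((σ*(σ+lam)+lam) * (σ+lam)^n / ((K-1) * (K/2-1) * Q))
          + lam / (K*(K-1)) * (((σ*(σ+lam)+lam) * (σ+lam)^n / Q) * (1/(K/2-1))) := by
          refine add_le_add (mul_le_mul_of_nonneg_left hA hσK) (mul_le_mul_of_nonneg_left ?_ hlamK)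
          exact hS
      _ = (σ*(σ+lam)+lam) * (σ+lam)^(n+1) / (K * (K-1) * ((K/2-1) * Q)) := by
          field_simp
          ring
end
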